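/- Let q be a positive integer and K a field. The map sending a pair (i, j) with i ≤ j in Fin q to the monomial τ_i·τ_j ∈ MvPolynomial (Equiv.Perm (Fin q)) K is injective; in particular, the minimal generating set of T_q² has exactly C(q,2) + q = q(q+1)/2 elements, which equals the number of vertices of M_q². -/

import Mathlib

/-- The vertex set of the simplicial complex `M_q²`: pairs `(i,j)` with `i ≤ j` in `Fin q`. -/
abbrev MqVertex (q : ℕ) := {p : Fin q × Fin q // p.1 ≤ p.2}

/-- The generator `τ_i = ∏_{σ ∈ S_q} x_σ^{σ(i)}` of the permutation ideal `T_q`, where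
`σ(i) = (σ i : ℕ) + 1` is the 1-indexed value of the permutation `σ` at `i`. -/
noncomputable def tauGen (K : Type*) [Field K] (q : ℕ) (i : Fin q) :
    MvPolynomial (Equiv.Perm (Fin q)) K :=
  ∏ σ : Equiv.Perm (Fin q), MvPolynomial.X σ ^ ((σ i : ℕ) + 1)

lemma prod_X_pow_eq_monomial' {ι : Type*} [Fintype ι] [DecidableEq ι] (K : Type*) [Field K]
    (e : ι → ℕ) :
    (∏ x : ι, (MvPolynomial.X x : MvPolynomial ι K) ^ e x)
      = MvPolynomial.monomial (Finsupp.equivFunOnFinite.symm e) 1 := by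
  rw [← MvPolynomial.prod_X_pow_eq_monomial]
  refine (Finset.prod_subset (Finset.subset_univ _) ?_).symm
  intro x _ hx
  simp only [Finsupp.mem_support_iff, ne_eq, not_not,
    Finsupp.equivFunOnFinite_symm_apply_apply] at hx ⊢
  simp [hx]

lemma key_combinatorial (q : ℕ) (hq : 0 < q) (i j i' j' : Fin q) (hij : i ≤ j) (hij' : i' ≤ j')
    (h : ∀ σ : Equiv.Perm (Fin q), ((σ i : ℕ)) + (σ j : ℕ) = (σ i' : ℕ) + (σ j' : ℕ)) :
    i = i' ∧ j = j' := by
  classical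
  set F : Fin q → ℤ := fun u =>
    (if u = i then 1 else 0) + (if u = j then 1 else 0)
      - (if u = i' then 1 else 0) - (if u = j' then 1 else 0) with hF
  have hsum : ∀ σ : Equiv.Perm (Fin q), ∑ u : Fin q, (σ u : ℤ) * F u = 0 := by
    intro σ
    have h1 : ∀ a : Fin q, ∑ u : Fin q, (σ u : ℤ) * (if u = a then 1 else 0) = (σ a : ℤ) := by
      intro a
      rw [Finset.sum_eq_single a]
      · simp
      · intro b _ hb; simp [hb]
      · intro ha; exact absurd (Finset.mem_univ a) ha
    have : ∑ u : Fin q, (σ u : ℤ) * F u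
        = (σ i : ℤ) + (σ j : ℤ) - (σ i' : ℤ) - (σ j' : ℤ) := by
      simp only [hF, mul_sub, mul_add]
      rw [Finset.sum_sub_distrib, Finset.sum_sub_distrib, Finset.sum_add_distrib,
        h1, h1, h1, h1]
    rw [this]
    have := h σ

    omega
  have hFconst : ∀ u v : Fin q, F u = F v := by
    intro u v
    by_cases huv : u = v
    · rw [huv]
    · have h0 : ∑ w : Fin q, ((Equiv.swap u v w : ℤ) - (w : ℤ)) * F w = 0 := by
        have := hsum (Equiv.swap u v)
        have h1 := hsum 1
        simp only [Equiv.Perm.coe_one, id_eq] at h1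
        calc ∑ w : Fin q, ((Equiv.swap u v w : ℤ) - (w : ℤ)) * F w
            = ∑ w : Fin q, ((Equiv.swap u v w : ℤ) * F w - (w : ℤ) * F w) := by
              apply Finset.sum_congr rfl; intro w _; ring
          _ = 0 := by rw [Finset.sum_sub_distrib, this, h1, sub_zero]
      have h2 : ∑ w : Fin q, ((Equiv.swap u v w : ℤ) - (w : ℤ)) * F w
          = ((v : ℤ) - (u : ℤ)) * F u + ((u : ℤ) - (v : ℤ)) * F v := by
        rw [← Finset.sum_subset (Finset.subset_univ ({u, v} : Finset (Fin q)))]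
        · rw [Finset.sum_pair huv, Equiv.swap_apply_left, Equiv.swap_apply_right]
        · intro w _ hw
          simp only [Finset.mem_insert, Finset.mem_singleton, not_or] at hw
          rw [Equiv.swap_apply_of_ne_of_ne hw.1 hw.2, sub_self, zero_mul]
      rw [h2] at h0
      have hval : (u : ℤ) ≠ (v : ℤ) := by
        intro hc
        exact huv (Fin.ext (by exact_mod_cast hc))
      have : ((v : ℤ) - (u : ℤ)) * (F u - F v) = 0 := by linarith [h0]
      rcases mul_eq_zero.mp this with h | h
      · exfalso; apply hval; linarith
      · linarith
  have hF0 : ∀ u : Fin q, F u = 0 := by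
    intro u
    have hsum0 : ∑ w : Fin q, F w = 0 := by
      have h1 : ∀ a : Fin q, ∑ w : Fin q, (if w = a then (1 : ℤ) else 0) = 1 := by
        intro a
        rw [Finset.sum_eq_single a]
        · simp
        · intro b _ hb; simp [hb]
        · intro ha; exact absurd (Finset.mem_univ a) ha
      simp only [hF]
      rw [Finset.sum_sub_distrib, Finset.sum_sub_distrib, Finset.sum_add_distrib,
        h1, h1, h1, h1]
      ring
    have hconst : ∑ w : Fin q, F w = (q : ℤ) * F u := by
      rw [Finset.sum_congr rfl (fun w _ => hFconst w u)]
      simp [mul_comm]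
    rw [hconst] at hsum0
    have hq' : (q : ℤ) ≠ 0 := by exact_mod_cast hq.ne'
    exact (mul_eq_zero.mp hsum0).resolve_left hq'
  -- extract membership facts
  have hi : i = i' ∨ i = j' := by
    by_contra hc
    push_neg at hc
    have := hF0 i
    simp only [hF, if_pos rfl, if_neg hc.1, if_neg hc.2] at this
    split_ifs at this <;> omega
  have hj : j = i' ∨ j = j' := by
    by_contra hc
    push_neg at hc
    have := hF0 j
    simp only [hF, if_pos rfl, if_neg hc.1, if_neg hc.2] at this
    split_ifs at this <;> omega
  have hi' : i' = i ∨ i' = j := by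
    by_contra hc
    push_neg at hc
    have := hF0 i'
    simp only [hF, if_pos rfl, if_neg hc.1, if_neg hc.2] at this
    split_ifs at this <;> omega
  have hj' : j' = i ∨ j' = j := by
    by_contra hc
    push_neg at hc
    have := hF0 j'
    simp only [hF, if_pos rfl, if_neg hc.1, if_neg hc.2] at this
    split_ifs at this <;> omega
  have goal : (i : ℕ) = i' ∧ (j : ℕ) = j' := by
    have e1 : (i : ℕ) = i' ∨ (i : ℕ) = j' := by
      rcases hi with h | h <;> [left; right] <;> rw [h]
    have e2 : (j : ℕ) = i' ∨ (j : ℕ) = j' := by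
      rcases hj with h | h <;> [left; right] <;> rw [h]
    have e3 : (i' : ℕ) = i ∨ (i' : ℕ) = j := by
      rcases hi' with h | h <;> [left; right] <;> rw [h]
    have e4 : (j' : ℕ) = i ∨ (j' : ℕ) = j := by
      rcases hj' with h | h <;> [left; right] <;> rw [h]
    have l1 : (i : ℕ) ≤ j := hij
    have l2 : (i' : ℕ) ≤ j' := hij'
    omega
  exact ⟨Fin.ext goal.1, Fin.ext goal.2⟩

/-- The map sending a pair `(i,j)` with `i ≤ j` in `Fin q` to the monomial `τ_i τ_j` is
injective; in particular the minimal generating set of `T_q²` has exactly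
`C(q,2) + q` elements, which equals the number of vertices of `M_q²`. -/
theorem tau_mul_injective (K : Type*) [Field K] (q : ℕ) (hq : 0 < q) :
    Function.Injective (fun v : MqVertex q => tauGen K q v.1.1 * tauGen K q v.1.2) ∧
    Fintype.card (MqVertex q) = q.choose 2 + q := by
  classical
  constructor
  · rintro ⟨⟨i, j⟩, hij⟩ ⟨⟨i', j'⟩, hij'⟩ h
    simp only at h
    have hmul : ∀ a b : Fin q, tauGen K q a * tauGen K q b
        = MvPolynomial.monomial
            (Finsupp.equivFunOnFinite.symm fun σ : Equiv.Perm (Fin q) =>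
              ((σ a : ℕ) + 1) + ((σ b : ℕ) + 1)) (1 : K) := by
      intro a b
      rw [tauGen, tauGen, ← Finset.prod_mul_distrib]
      rw [← prod_X_pow_eq_monomial']
      apply Finset.prod_congr rfl
      intro σ _
      exact (pow_add _ _ _).symm
    rw [hmul, hmul] at h
    have h2 := MvPolynomial.monomial_left_injective (one_ne_zero (α := K)) h
    have h3 := Finsupp.equivFunOnFinite.symm.injective h2
    have hkey : ∀ σ : Equiv.Perm (Fin q),
        ((σ i : ℕ)) + (σ j : ℕ) = (σ i' : ℕ) + (σ j' : ℕ) := by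
      intro σ
      have := congrFun h3 σ
      omega
    obtain ⟨e1, e2⟩ := key_combinatorial q hq i j i' j' hij hij' hkey
    exact Subtype.ext (Prod.ext e1 e2)
  · rw [Fintype.card_congr (Equiv.subtypeProdEquivSigmaSubtype (· ≤ · : Fin q → Fin q → Prop))]
    rw [Fintype.card_sigma]
    have h1 : ∀ i : Fin q, Fintype.card {j : Fin q // i ≤ j} = q - i := by
      intro i
      have : Fintype.card {j : Fin q // i ≤ j} = Fintype.card (Set.Ici i) :=
        Fintype.card_congr (Equiv.subtypeEquivRight fun j => (Set.mem_Ici).symm)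
      rw [this, Fintype.card_Ici, Fin.card_Ici]
    simp only [h1]
    rw [Fin.sum_univ_eq_sum_range (fun i => q - i)]
    have h2 : ∀ m : ℕ, ∑ i ∈ Finset.range m, (m - i) = (∑ i ∈ Finset.range m, i) + m := by
      intro m
      induction m with
      | zero => simp
      | succ n ih =>
        rw [Finset.sum_range_succ, Finset.sum_range_succ]
        have h3 : ∑ i ∈ Finset.range n, (n + 1 - i) = ∑ i ∈ Finset.range n, ((n - i) + 1) := by
          apply Finset.sum_congr rfl
          intro i hi
          have := Finset.mem_range.mp hi
          omega
        rw [h3, Finset.sum_add_distrib, ih]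
        simp
        omega
    rw [h2 q, Nat.choose_two_right]
    congr 1
    rw [← Finset.sum_range_id_mul_two q, Nat.mul_div_cancel _ (by norm_num)]
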